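/- Let X₁,...,X_r be independent random variables with X_i ~ Γ_λ(α_i, β) (all with the same rate β), λ ∈ (0,1), and let n be a positive integer with n + max_i α_i < 1/λ. Then E[(X₁+···+X_r)^n] = (1/β^n) ∑_{l₁+···+l_r=n} (n choose l₁,...,l_r) ∏_{i=1}^r [C(l_i+α_i-1, l_i) / C_λ(1-λ(α_i+1), l_i)], where C(x,l)=(x)_l/l! and C_λ(x,l)=(x)_{l,λ}/l!. -/

import Mathlib

open MeasureTheory Finset

/-- The degenerate gamma function `Γ_λ(s) = ∫_0^∞ (1+λt)^{-1/λ} t^{s-1} dt`. -/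
noncomputable def degGamma (lam s : ℝ) : ℝ :=
  ∫ t in Set.Ioi (0:ℝ), (1 + lam * t) ^ (-1/lam) * t ^ (s - 1)

/-- The probability density function of the degenerate gamma distribution `Γ_λ(α,β)`. -/
noncomputable def degGammaPdf (lam α β x : ℝ) : ℝ :=
  if 0 < x then (1 / degGamma lam α) * β * (1 + lam * β * x) ^ (-1/lam) * (β * x) ^ (α - 1)
  else 0

/-- The falling factorial `(x)_n = x(x-1)⋯(x-n+1)`. -/
noncomputable def fallingFactorial (x : ℝ) (n : ℕ) : ℝ :=
  ∏ j ∈ Finset.range n, (x - j)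

/-- The generalized binomial coefficient `C(x,n) = (x)_n / n!`. -/
noncomputable def genBinom (x : ℝ) (n : ℕ) : ℝ := fallingFactorial x n / n.factorial

/-- The degenerate falling factorial `(x)_{n,λ} = x(x-λ)⋯(x-(n-1)λ)`. -/
noncomputable def degFall (x lam : ℝ) (n : ℕ) : ℝ :=
  ∏ j ∈ Finset.range n, (x - j * lam)

/-- The λ-binomial coefficient `C_λ(x,n) = (x)_{n,λ} / n!`. -/
noncomputable def lamBinom (x lam : ℝ) (n : ℕ) : ℝ := degFall x lam n / n.factorial

open Filter ProbabilityTheory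

set_option linter.unusedSectionVars false
set_option linter.unusedVariables false


section Analytic
variable {lam s : ℝ}

lemma negdiv_nonpos (hl : 0 < lam) : -1/lam ≤ 0 := by
  rw [neg_div]
  have : (0:ℝ) ≤ 1/lam := by positivity
  linarith

lemma contOn_deg (hl : 0 < lam) :
    ContinuousOn (fun t : ℝ => (1 + lam * t) ^ (-1/lam) * t ^ (s - 1)) (Set.Ioi 0) := by
  apply ContinuousOn.mul
  · apply ContinuousOn.rpow_const (by fun_prop)
    intro t ht
    left
    have : 0 < t := ht
    nlinarith
  · apply ContinuousOn.rpow_const continuousOn_id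
    intro t ht
    exact Or.inl (ne_of_gt ht)

lemma integrableOn_deg (hl : 0 < lam) (h0 : 0 < s) (hs : s < 1/lam) :
    IntegrableOn (fun t : ℝ => (1 + lam * t) ^ (-1/lam) * t ^ (s - 1)) (Set.Ioi 0) := by
  have hIoi : Set.Ioc (0:ℝ) 1 ∪ Set.Ioi 1 = Set.Ioi 0 := Set.Ioc_union_Ioi_eq_Ioi zero_le_one
  rw [← hIoi]
  apply IntegrableOn.union
  · have hbd : Integrable (fun t : ℝ => t ^ (s-1)) (volume.restrict (Set.Ioc (0:ℝ) 1)) := by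
      have := intervalIntegral.intervalIntegrable_rpow' (a := 0) (b := 1) (r := s - 1)
        (by linarith)
      rwa [intervalIntegrable_iff_integrableOn_Ioc_of_le zero_le_one] at this
    apply Integrable.mono' hbd
    · exact ((contOn_deg hl).mono (Set.Ioc_subset_Ioi_self)).aestronglyMeasurable
        measurableSet_Ioc
    · rw [ae_restrict_iff' measurableSet_Ioc]
      filter_upwards with t ht
      have ht0 : 0 < t := ht.1
      have h1 : (0:ℝ) < 1 + lam * t := by nlinarith
      have h2 : (1 + lam * t) ^ (-1/lam) ≤ 1 :=
        Real.rpow_le_one_of_one_le_of_nonpos (by nlinarith) (negdiv_nonpos hl)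
      rw [Real.norm_eq_abs, abs_of_nonneg (by positivity)]
      calc (1 + lam * t) ^ (-1/lam) * t ^ (s-1) ≤ 1 * t ^ (s-1) := by
            apply mul_le_mul_of_nonneg_right h2 (by positivity)
        _ = t ^ (s-1) := one_mul _
  · have hbd : Integrable (fun t : ℝ => lam ^ (-1/lam) * t ^ (s - 1 - 1/lam))
        (volume.restrict (Set.Ioi (1:ℝ))) := by
      exact (integrableOn_Ioi_rpow_of_lt (by linarith) one_pos).const_mul _
    apply Integrable.mono' hbd
    · exact ((contOn_deg hl).mono (Set.Ioi_subset_Ioi zero_le_one)).aestronglyMeasurable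
        measurableSet_Ioi
    · rw [ae_restrict_iff' measurableSet_Ioi]
      filter_upwards with t ht
      have ht1 : (1:ℝ) < t := ht
      have ht0 : (0:ℝ) < t := by linarith
      have h1 : (0:ℝ) < lam * t := by positivity
      have h2 : (1 + lam * t) ^ (-1/lam) ≤ (lam * t) ^ (-1/lam) :=
        Real.rpow_le_rpow_of_nonpos h1 (by linarith) (negdiv_nonpos hl)
      rw [Real.norm_eq_abs, abs_of_nonneg (by positivity)]
      calc (1 + lam * t) ^ (-1/lam) * t ^ (s-1)
          ≤ (lam * t) ^ (-1/lam) * t ^ (s-1) :=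
            mul_le_mul_of_nonneg_right h2 (by positivity)
        _ = lam ^ (-1/lam) * t ^ (s - 1 - 1/lam) := by
            rw [Real.mul_rpow hl.le ht0.le, mul_assoc, ← Real.rpow_add ht0]
            ring_nf

lemma degGamma_pos (hl : 0 < lam) (h0 : 0 < s) (hs : s < 1/lam) :
    0 < degGamma lam s := by
  have hae : 0 ≤ᶠ[ae (volume.restrict (Set.Ioi (0:ℝ)))]
      (fun t : ℝ => (1 + lam * t) ^ (-1/lam) * t ^ (s - 1)) := by
    rw [EventuallyLE, ae_restrict_iff' measurableSet_Ioi]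
    filter_upwards with t ht
    have ht0 : 0 < t := ht
    have : (0:ℝ) < 1 + lam * t := by nlinarith
    positivity
  apply (setIntegral_pos_iff_support_of_nonneg_ae hae (integrableOn_deg hl h0 hs)).2
  have hsub : Set.Ioi (0:ℝ) ⊆ Function.support
      (fun t : ℝ => (1 + lam * t) ^ (-1/lam) * t ^ (s - 1)) ∩ Set.Ioi 0 := by
    intro t ht
    have ht0 : (0:ℝ) < t := ht
    have h1 : (0:ℝ) < 1 + lam * t := by nlinarith
    refine ⟨?_, ht⟩
    simp only [Function.mem_support]
    positivity
  have h1 : (0:ENNReal) < volume (Set.Ioi (0:ℝ)) := by simp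
  exact lt_of_lt_of_le h1 (measure_mono hsub)

end Analytic

section Rec
variable {lam s : ℝ}


variable {lam s : ℝ}

lemma degGamma_rec (hl : 0 < lam) (h0 : 0 < s) (hs : s + 1 < 1/lam) :
    (1 - (s+1)*lam) * degGamma lam (s+1) = s * degGamma lam s := by
  set F : ℝ → ℝ := fun t => t ^ s * (1 + lam * t) ^ (1 - 1/lam) with hF
  set f' : ℝ → ℝ := fun t =>
    s * ((1 + lam * t) ^ (-1/lam) * t ^ (s - 1))
      - (1 - (s+1)*lam) * ((1 + lam * t) ^ (-1/lam) * t ^ (s+1-1)) with hf'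
  have hs' : s < 1/lam := by linarith
  have hint1 := integrableOn_deg hl h0 hs'
  have hint2 := integrableOn_deg hl (by linarith : (0:ℝ) < s + 1) hs
  have hf'int : IntegrableOn f' (Set.Ioi 0) :=
    (hint1.const_mul s).sub (hint2.const_mul _)
  have hderiv : ∀ t ∈ Set.Ioi (0:ℝ), HasDerivAt F (f' t) t := by
    intro t ht
    have ht0 : (0:ℝ) < t := ht
    have hb : (0:ℝ) < 1 + lam * t := by nlinarith
    have h1 : HasDerivAt (fun t : ℝ => t ^ s) (s * t ^ (s-1)) t := by
      simpa using Real.hasDerivAt_rpow_const (p := s) (Or.inl (ne_of_gt ht0))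
    have h2 : HasDerivAt (fun t : ℝ => (1 + lam * t) ^ (1 - 1/lam))
        (lam * (1 - 1/lam) * (1 + lam * t) ^ (1 - 1/lam - 1)) t := by
      have hin : HasDerivAt (fun t : ℝ => 1 + lam * t) lam t := by
        simpa using ((hasDerivAt_id t).const_mul lam).const_add 1
      exact hin.rpow_const (Or.inl (ne_of_gt hb))
    have hmul := h1.mul h2
    convert hmul using 1
    case e'_4 => rfl
    case e'_5 => rfl
    case e'_8 => rfl
    have e1 : (1 + lam * t) ^ (1 - 1/lam) = (1 + lam * t) * (1 + lam * t) ^ (-1/lam) := by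
      rw [show (1 : ℝ) - 1/lam = 1 + (-1/lam) by ring, Real.rpow_add hb, Real.rpow_one]
    have e2 : (1 + lam * t) ^ (1 - 1/lam - 1) = (1 + lam * t) ^ (-1/lam) := by
      rw [show (1 : ℝ) - 1/lam - 1 = -1/lam by ring]
    have e4 : t ^ s = t ^ (s-1) * t := by
      rw [← Real.rpow_add_one (ne_of_gt ht0) (s-1)]
      norm_num
    have e3 : t ^ (s+1-1) = t ^ (s-1) * t := by
      rw [show s + 1 - 1 = s by ring]
      exact e4
    simp only [hf']
    rw [e1, e2, e3, e4]
    field_simp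
    ring
  have hcont : ContinuousWithinAt F (Set.Ici 0) 0 := by
    apply ContinuousAt.continuousWithinAt
    apply ContinuousAt.mul
    · exact Real.continuousAt_rpow_const 0 s (Or.inr h0.le)
    · have hb : ContinuousAt (fun x : ℝ => 1 + lam * x) 0 := by fun_prop
      exact hb.rpow_const (Or.inl (by norm_num))
  have htop : Tendsto F atTop (nhds 0) := by
    have hexp : (0:ℝ) < 1/lam - s - 1 := by linarith
    have hlim : Tendsto (fun t : ℝ => lam ^ (1 - 1/lam) * t ^ (-(1/lam - s - 1)))
        atTop (nhds 0) := by
      simpa using (tendsto_rpow_neg_atTop hexp).const_mul (lam ^ (1 - 1/lam))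
    apply squeeze_zero' (g := fun t : ℝ => lam ^ (1 - 1/lam) * t ^ (-(1/lam - s - 1)))
    · filter_upwards [eventually_ge_atTop (1:ℝ)] with t ht
      have ht0 : (0:ℝ) < t := by linarith
      have hb : (0:ℝ) < 1 + lam * t := by nlinarith
      positivity
    · filter_upwards [eventually_ge_atTop (1:ℝ)] with t ht
      have ht0 : (0:ℝ) < t := by linarith
      have h1 : (0:ℝ) < lam * t := by positivity
      have h2 : (1 + lam * t) ^ (1 - 1/lam) ≤ (lam * t) ^ (1 - 1/lam) := by
        apply Real.rpow_le_rpow_of_nonpos h1 (by linarith)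
        have : (1:ℝ) ≤ 1/lam := by linarith
        linarith
      calc F t ≤ t ^ s * ((lam * t) ^ (1 - 1/lam)) :=
            mul_le_mul_of_nonneg_left h2 (by positivity)
        _ = lam ^ (1 - 1/lam) * t ^ (-(1/lam - s - 1)) := by
            rw [Real.mul_rpow hl.le ht0.le, show -(1/lam - s - 1) = s + (1 - 1/lam) by ring,
              Real.rpow_add ht0]
            ring
    · exact hlim
  have key := integral_Ioi_of_hasDerivAt_of_tendsto hcont hderiv hf'int htop
  have hF0 : F 0 = 0 := by
    simp [hF, Real.zero_rpow (ne_of_gt h0)]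
  rw [hF0, sub_zero] at key
  have split : ∫ t in Set.Ioi (0:ℝ), f' t
      = s * degGamma lam s - (1 - (s+1)*lam) * degGamma lam (s+1) := by
    rw [hf', integral_sub (hint1.const_mul s) (hint2.const_mul _),
      integral_const_mul, integral_const_mul]
    rfl
  rw [split] at key
  linarith

end Rec

variable {lam a β : ℝ}


lemma measurable_degGammaPdf : Measurable (degGammaPdf lam a β) := by
  unfold degGammaPdf
  apply Measurable.ite (measurableSet_lt measurable_const measurable_id)
  · fun_prop
  · exact measurable_const

lemma degGammaPdf_nonneg (hl : 0 < lam) (ha : 0 < a) (has : a < 1/lam) (hβ : 0 < β) (x : ℝ) :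
    0 ≤ degGammaPdf lam a β x := by
  unfold degGammaPdf
  split_ifs with hx
  · have h1 : (0:ℝ) < 1 + lam * β * x := by nlinarith [mul_pos (mul_pos hl hβ) hx]
    have h2 : (0:ℝ) < β * x := by positivity
    have h3 : 0 < degGamma lam a := degGamma_pos hl ha has
    positivity
  · exact le_refl 0

lemma degGamma_ratio (hl : 0 < lam) (ha : 0 < a) (l : ℕ) (hconv : a + l < 1/lam) :
    degGamma lam (a + l) * ∏ j ∈ Finset.range l, (1 - (a + j + 1) * lam)
      = (∏ j ∈ Finset.range l, (a + j)) * degGamma lam a := by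
  induction l with
  | zero => simp
  | succ l ih =>
    have hcast : ((l+1 : ℕ) : ℝ) = (l : ℝ) + 1 := by push_cast; ring
    have hl' : a + l < 1/lam := by
      rw [hcast] at hconv; linarith
    have hrec := degGamma_rec hl (by positivity : (0:ℝ) < a + l)
      (by rw [hcast] at hconv; linarith)
    rw [Finset.prod_range_succ, Finset.prod_range_succ, hcast, show a + ((l:ℝ)+1) = (a+l)+1 by ring]
    have : degGamma lam (a + l + 1) * (1 - (a + l + 1) * lam) = (a + l) * degGamma lam (a + l) := by
      have h := hrec
      rw [show (a:ℝ) + ↑l + 1 = a + ↑l + 1 by ring]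
      linarith [hrec]
    calc degGamma lam (a + l + 1) * ((∏ j ∈ Finset.range l, (1 - (a + j + 1) * lam)) * (1 - (a + l + 1) * lam))
        = (degGamma lam (a + l + 1) * (1 - (a + l + 1) * lam)) * ∏ j ∈ Finset.range l, (1 - (a + j + 1) * lam) := by ring
      _ = ((a + l) * degGamma lam (a + l)) * ∏ j ∈ Finset.range l, (1 - (a + j + 1) * lam) := by rw [this]
      _ = (a + l) * (degGamma lam (a + l) * ∏ j ∈ Finset.range l, (1 - (a + j + 1) * lam)) := by ring
      _ = (a + l) * ((∏ j ∈ Finset.range l, (a + j)) * degGamma lam a) := by rw [ih hl']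
      _ = ((∏ j ∈ Finset.range l, (a + j)) * (a + l)) * degGamma lam a := by ring

section Moment

variable (hl : 0 < lam) (ha : 0 < a) (hβ : 0 < β) (l : ℕ) (hconv : a + l < 1/lam)

include hβ in
lemma moment_eqOn (hG : degGamma lam a ≠ 0) : ∀ x ∈ Set.Ioi (0:ℝ), x ^ l * degGammaPdf lam a β x
    = ((1 / degGamma lam a) * β / β ^ l) *
      ((1 + lam * (β * x)) ^ (-1/lam) * (β * x) ^ (a + l - 1)) := by
  intro x hx
  have hx0 : (0:ℝ) < x := hx
  have hbx : (0:ℝ) < β * x := by positivity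
  rw [degGammaPdf, if_pos hx0]
  have e1 : (β * x) ^ (a + l - 1) = (β * x) ^ (a - 1) * (β * x) ^ (l:ℝ) := by
    rw [← Real.rpow_add hbx]; ring_nf
  have e2 : (β * x) ^ (l:ℝ) = β ^ l * x ^ l := by
    rw [Real.rpow_natCast, mul_pow]
  have hbl : (β:ℝ) ^ l ≠ 0 := pow_ne_zero _ hβ.ne'
  rw [e1, e2, show lam * β * x = lam * (β * x) by ring]
  field_simp [hbl, hG]

include hl ha hβ hconv in
lemma moment_integrableOn :
    IntegrableOn (fun x => x ^ l * degGammaPdf lam a β x) (Set.Ioi (0:ℝ)) := by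
  have hal : (0:ℝ) < a + l := by positivity
  have hg : IntegrableOn (fun t : ℝ => (1 + lam * t) ^ (-1/lam) * t ^ (a + l - 1))
      (Set.Ioi 0) := integrableOn_deg hl hal hconv
  have hG : degGamma lam a ≠ 0 :=
    ne_of_gt (degGamma_pos hl ha (by have : (0:ℝ) ≤ l := Nat.cast_nonneg l; linarith))
  have hcomp : IntegrableOn
      (fun x : ℝ => (1 + lam * (β * x)) ^ (-1/lam) * (β * x) ^ (a + l - 1)) (Set.Ioi 0) := by
    have := (integrableOn_Ioi_comp_mul_left_iff
      (fun t : ℝ => (1 + lam * t) ^ (-1/lam) * t ^ (a + l - 1)) 0 hβ).2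
    rw [mul_zero] at this
    exact this hg
  refine IntegrableOn.congr_fun (hcomp.const_mul ((1 / degGamma lam a) * β / β ^ l))
    (fun x hx => (moment_eqOn hβ l hG x hx).symm) measurableSet_Ioi

include hl ha hβ hconv in
lemma moment_integrable :
    Integrable (fun x => x ^ l * degGammaPdf lam a β x) := by
  have h0 : ∀ x ∉ Set.Ioi (0:ℝ), x ^ l * degGammaPdf lam a β x = 0 := by
    intro x hx
    rw [degGammaPdf, if_neg (by simpa using hx), mul_zero]
  have : (fun x => x ^ l * degGammaPdf lam a β x)
      = Set.indicator (Set.Ioi 0) (fun x => x ^ l * degGammaPdf lam a β x) := by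
    funext x
    by_cases hx : x ∈ Set.Ioi (0:ℝ)
    · rw [Set.indicator_of_mem hx]
    · rw [Set.indicator_of_notMem hx, h0 x hx]
  rw [this, integrable_indicator_iff measurableSet_Ioi]
  exact moment_integrableOn hl ha hβ l hconv

include hl ha hβ hconv in
lemma moment_integral :
    ∫ x, x ^ l * degGammaPdf lam a β x
      = (1 / β ^ l) * (degGamma lam (a + l) / degGamma lam a) := by
  have h0 : ∀ x ∉ Set.Ioi (0:ℝ), x ^ l * degGammaPdf lam a β x = 0 := by
    intro x hx
    rw [degGammaPdf, if_neg (by simpa using hx), mul_zero]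
  have hG : degGamma lam a ≠ 0 :=
    ne_of_gt (degGamma_pos hl ha (by have : (0:ℝ) ≤ l := Nat.cast_nonneg l; linarith))
  rw [← setIntegral_eq_integral_of_forall_compl_eq_zero h0]
  rw [setIntegral_congr_fun measurableSet_Ioi (moment_eqOn hβ l hG)]
  rw [integral_const_mul]
  have := integral_comp_mul_left_Ioi
    (fun t : ℝ => (1 + lam * t) ^ (-1/lam) * t ^ (a + l - 1)) 0 hβ
  rw [mul_zero] at this
  rw [this]
  have hG : degGamma lam (a + l)
      = ∫ t in Set.Ioi (0:ℝ), (1 + lam * t) ^ (-1/lam) * t ^ (a + l - 1) := rfl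
  rw [smul_eq_mul, ← hG]
  have hGa : degGamma lam a ≠ 0 :=
    ne_of_gt (degGamma_pos hl ha (by have : (0:ℝ) ≤ l := Nat.cast_nonneg l; linarith))
  field_simp

end Moment

section Prob


variable {Ω : Type*} [MeasureSpace Ω] {P : Measure Ω} [IsProbabilityMeasure P]

/-- product of independent integrable rv's: integrability and factorization. -/
lemma indep_prod_integral {r : ℕ} (Y : Fin r → Ω → ℝ) (hY : ∀ i, Measurable (Y i))
    (hindep : ProbabilityTheory.iIndepFun Y P)
    (hint : ∀ i, Integrable (Y i) P) (s : Finset (Fin r)) :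
    Integrable (fun ω => ∏ i ∈ s, Y i ω) P ∧
      ∫ ω, ∏ i ∈ s, Y i ω ∂P = ∏ i ∈ s, ∫ ω, Y i ω ∂P := by
  classical
  induction s using Finset.induction with
  | empty => simp [integrable_const]
  | insert j s hi ih =>
    have hIndep : IndepFun (∏ k ∈ s, Y k) (Y j) P :=
      hindep.indepFun_finsetProd_of_notMem hY hi
    have hprodint : Integrable (∏ k ∈ s, Y k) P := by
      have := ih.1
      convert this using 1
      funext ω
      simp
    have hmul : Integrable ((∏ k ∈ s, Y k) * Y j) P :=
      hIndep.integrable_mul hprodint (hint j)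
    constructor
    · have : (fun ω => ∏ i ∈ insert j s, Y i ω) = (∏ k ∈ s, Y k) * Y j := by
        funext ω
        simp [Finset.prod_insert hi, mul_comm]
      rw [this]
      exact hmul
    · have h1 : (fun ω => ∏ i ∈ insert j s, Y i ω) = (∏ k ∈ s, Y k) * Y j := by
        funext ω
        simp [Finset.prod_insert hi, mul_comm]
      rw [h1, hIndep.integral_mul_eq_mul_integral hprodint.aestronglyMeasurable (hint j).aestronglyMeasurable,
        Finset.prod_insert hi, ← ih.2, mul_comm]
      congr 1
      · apply integral_congr_ae
        filter_upwards with ω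
        simp

variable {lam a β : ℝ}

lemma rv_moment (hl : 0 < lam) (ha : 0 < a) (hβ : 0 < β) (l : ℕ) (hconv : a + l < 1/lam)
    (X : Ω → ℝ) (hX : Measurable X)
    (hd : P.map X = volume.withDensity (fun x => ENNReal.ofReal (degGammaPdf lam a β x))) :
    Integrable (fun ω => X ω ^ l) P ∧
      ∫ ω, X ω ^ l ∂P = (1/β^l) * (degGamma lam (a + l) / degGamma lam a) := by
  have ha' : a < 1/lam := by
    have : (0:ℝ) ≤ l := Nat.cast_nonneg l
    linarith
  have hnn : ∀ x, 0 ≤ degGammaPdf lam a β x := degGammaPdf_nonneg hl ha ha' hβ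
  have hmeasd : Measurable (fun x => ENNReal.ofReal (degGammaPdf lam a β x)) :=
    measurable_degGammaPdf.ennreal_ofReal
  have h1 : Integrable (fun x : ℝ => x ^ l) (P.map X) := by
    rw [hd, integrable_withDensity_iff hmeasd
      (Filter.Eventually.of_forall fun x => ENNReal.ofReal_lt_top)]
    have : (fun x : ℝ => x ^ l * (ENNReal.ofReal (degGammaPdf lam a β x)).toReal)
        = fun x => x ^ l * degGammaPdf lam a β x := by
      funext x
      rw [ENNReal.toReal_ofReal (hnn x)]
    rw [this]
    exact moment_integrable hl ha hβ l hconv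
  constructor
  · exact (integrable_map_measure h1.aestronglyMeasurable hX.aemeasurable).1 h1
  · rw [← integral_map hX.aemeasurable h1.aestronglyMeasurable, hd]
    rw [show (fun x => ENNReal.ofReal (degGammaPdf lam a β x))
        = (fun x => ((degGammaPdf lam a β x).toNNReal : ENNReal)) from rfl]
    rw [integral_withDensity_eq_integral_smul measurable_degGammaPdf.real_toNNReal]
    rw [← moment_integral hl ha hβ l hconv]
    apply integral_congr_ae
    filter_upwards with x
    rw [NNReal.smul_def, smul_eq_mul, Real.coe_toNNReal _ (hnn x), mul_comm]

end Prob

lemma fall_eq (a : ℝ) (l : ℕ) :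
    fallingFactorial ((l:ℝ) + a - 1) l = ∏ j ∈ Finset.range l, (a + j) := by
  calc fallingFactorial ((l:ℝ) + a - 1) l
      = ∏ j ∈ Finset.range l, (a + ((l - 1 - j : ℕ) : ℝ)) := by
        apply Finset.prod_congr rfl
        intro j hj
        have hj' : j < l := Finset.mem_range.1 hj
        have h1 : ((l - 1 - j : ℕ) : ℝ) = (l:ℝ) - 1 - j := by
          have : l - 1 - j + j + 1 = l := by omega
          have := congrArg (fun m : ℕ => (m : ℝ)) this
          push_cast at this
          linarith
        rw [h1]
        ring
    _ = ∏ j ∈ Finset.range l, (a + j) :=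
        Finset.prod_range_reflect (fun j => a + (j:ℝ)) l

lemma degFall_eq (a lam : ℝ) (l : ℕ) :
    degFall (1 - lam * (a + 1)) lam l
      = ∏ j ∈ Finset.range l, (1 - (a + j + 1) * lam) := by
  apply Finset.prod_congr rfl
  intro j hj
  ring

lemma ratio_eq {lam a : ℝ} (hl : 0 < lam) (ha : 0 < a) (l : ℕ) (hconv : a + l < 1/lam) :
    degGamma lam (a + l) / degGamma lam a
      = genBinom ((l:ℝ) + a - 1) l / lamBinom (1 - lam * (a + 1)) lam l := by
  have hGa : 0 < degGamma lam a :=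
    degGamma_pos hl ha (by have : (0:ℝ) ≤ l := Nat.cast_nonneg l; linarith)
  have hD : 0 < ∏ j ∈ Finset.range l, (1 - (a + j + 1) * lam) := by
    apply Finset.prod_pos
    intro j hj
    have hj0 : j + 1 ≤ l := Finset.mem_range.1 hj
    have hj' : (j:ℝ) + 1 ≤ l := by exact_mod_cast hj0
    have h1 : (a + j + 1) < 1/lam := by linarith
    have := mul_lt_mul_of_pos_right h1 hl
    rw [one_div, inv_mul_cancel₀ (ne_of_gt hl)] at this
    linarith
  have key := degGamma_ratio hl ha l hconv
  have hfac : ((l.factorial : ℝ)) ≠ 0 := Nat.cast_ne_zero.2 l.factorial_ne_zero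
  have h2 : genBinom ((l:ℝ) + a - 1) l / lamBinom (1 - lam * (a + 1)) lam l
      = (∏ j ∈ Finset.range l, (a + j)) / ∏ j ∈ Finset.range l, (1 - (a + j + 1) * lam) := by
    rw [genBinom, lamBinom, fall_eq, degFall_eq, div_div_div_cancel_right₀]
    exact hfac
  rw [h2, div_eq_div_iff (ne_of_gt hGa) (ne_of_gt hD)]
  linarith [key]

theorem degGamma_sum_moment
    {Ω : Type*} [MeasureSpace Ω] (P : Measure Ω) [IsProbabilityMeasure P]
    (r : ℕ) (hr : 1 ≤ r) (X : Fin r → Ω → ℝ) (hmeas : ∀ i, Measurable (X i))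
    (lam β : ℝ) (hlam : lam ∈ Set.Ioo (0:ℝ) 1) (hβ : 0 < β)
    (α : Fin r → ℝ) (hα : ∀ i, 0 < α i)
    (hindep : ProbabilityTheory.iIndepFun X P)
    (hdist : ∀ i, P.map (X i) =
      volume.withDensity (fun x => ENNReal.ofReal (degGammaPdf lam (α i) β x)))
    (n : ℕ) (hn : 1 ≤ n) (hconv : ∀ i, (n : ℝ) + α i < 1 / lam) :
    ∫ ω, (∑ i, X i ω) ^ n ∂P =
      (1 / β ^ n) * ∑ l ∈ Finset.Nat.antidiagonalTuple r n,
        (Nat.multinomial Finset.univ l : ℝ) *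
          ∏ i, genBinom (l i + α i - 1) (l i) / lamBinom (1 - lam * (α i + 1)) lam (l i) := by
  classical
  obtain ⟨hl, hl1⟩ := hlam
  rw [← Finset.piAntidiag_univ_fin_eq_antidiagonalTuple]
  -- convergence per index
  have hconvk : ∀ (k : Fin r → ℕ), k ∈ Finset.piAntidiag (univ : Finset (Fin r)) n →
      ∀ i, α i + k i < 1 / lam := by
    intro k hk i
    obtain ⟨hsum, -⟩ := (Finset.mem_piAntidiag.1 hk)
    have hki : k i ≤ n := hsum ▸ Finset.single_le_sum (fun j _ => Nat.zero_le _) (mem_univ i)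
    have : (k i : ℝ) ≤ n := by exact_mod_cast hki
    linarith [hconv i]
  have hmain : ∀ k ∈ Finset.piAntidiag (univ : Finset (Fin r)) n,
      Integrable (fun ω => ∏ i, X i ω ^ k i) P ∧
        ∫ ω, ∏ i, X i ω ^ k i ∂P
          = ∏ i, ((1 / β ^ (k i)) * (degGamma lam (α i + k i) / degGamma lam (α i))) := by
    intro k hk
    set Y : Fin r → Ω → ℝ := fun i ω => X i ω ^ k i with hY
    have hYmeas : ∀ i, Measurable (Y i) := fun i => (hmeas i).pow_const (k i)
    have hYindep : ProbabilityTheory.iIndepFun Y P :=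
      hindep.comp (fun i => fun x => x ^ k i) (fun i => measurable_id.pow_const (k i))
    have hmom := fun i => rv_moment (P := P) hl (hα i) hβ (k i) (hconvk k hk i)
      (X i) (hmeas i) (hdist i)
    have hprod := indep_prod_integral (P := P) Y hYmeas hYindep (fun i => (hmom i).1) univ
    refine ⟨hprod.1, ?_⟩
    rw [hprod.2]
    exact Finset.prod_congr rfl (fun i _ => (hmom i).2)
  have hpt : ∀ ω, (∑ i, X i ω) ^ n
      = ∑ k ∈ Finset.piAntidiag (univ : Finset (Fin r)) n,
          (Nat.multinomial univ k : ℝ) * ∏ i, X i ω ^ k i :=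
    fun ω => Finset.sum_pow_eq_sum_piAntidiag univ (fun i => X i ω) n
  calc ∫ ω, (∑ i, X i ω) ^ n ∂P
      = ∫ ω, ∑ k ∈ Finset.piAntidiag (univ : Finset (Fin r)) n,
          (Nat.multinomial univ k : ℝ) * ∏ i, X i ω ^ k i ∂P := by
        apply integral_congr_ae
        filter_upwards with ω
        exact hpt ω
    _ = ∑ k ∈ Finset.piAntidiag (univ : Finset (Fin r)) n,
          ∫ ω, (Nat.multinomial univ k : ℝ) * ∏ i, X i ω ^ k i ∂P :=
        integral_finset_sum _ (fun k hk => ((hmain k hk).1.const_mul _))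
    _ = ∑ k ∈ Finset.piAntidiag (univ : Finset (Fin r)) n,
          (Nat.multinomial univ k : ℝ)
            * ∏ i, ((1 / β ^ (k i)) * (degGamma lam (α i + k i) / degGamma lam (α i))) := by
        refine Finset.sum_congr rfl (fun k hk => ?_)
        rw [integral_const_mul, (hmain k hk).2]
    _ = ∑ k ∈ Finset.piAntidiag (univ : Finset (Fin r)) n,
          (Nat.multinomial univ k : ℝ) * ((1 / β ^ n)
            * ∏ i, genBinom (k i + α i - 1) (k i) / lamBinom (1 - lam * (α i + 1)) lam (k i)) := by
        refine Finset.sum_congr rfl (fun k hk => ?_)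
        congr 1
        rw [Finset.prod_mul_distrib]
        congr 1
        · obtain ⟨hsum, -⟩ := (Finset.mem_piAntidiag.1 hk)
          rw [← hsum]
          simp only [one_div]
          rw [← Finset.prod_pow_eq_pow_sum, ← Finset.prod_inv_distrib]
        · refine Finset.prod_congr rfl (fun i _ => ?_)
          rw [ratio_eq hl (hα i) (k i) (hconvk k hk i)]
    _ = (1 / β ^ n) * ∑ k ∈ Finset.piAntidiag (univ : Finset (Fin r)) n,
          (Nat.multinomial univ k : ℝ)
            * ∏ i, genBinom (k i + α i - 1) (k i) / lamBinom (1 - lam * (α i + 1)) lam (k i) := by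
        rw [Finset.mul_sum]
        exact Finset.sum_congr rfl (fun k hk => by ring)
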